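/- Let p and q be Borel probability measures on ℝ^n and let β > 0. Then the β-admissible Wasserstein distance satisfies D_W^β(p, q) = 0 if and only if p(A) ≤ (1 + β)·q(A) for every Borel set A ⊆ ℝ^n. -/

import Mathlib

open MeasureTheory Metric Set
open scoped ENNReal

noncomputable section

/-- The topological support of a Borel measure: the smallest closed set of full measure,
realized as the intersection of all closed sets whose complement is null. -/
def msupport {X : Type*} [TopologicalSpace X] [MeasurableSpace X] (μ : Measure X) : Set X :=
  ⋂₀ {S : Set X | IsClosed S ∧ μ Sᶜ = 0}

/-- The symmetric support difference (SSD) divergence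
`D_△(p, q) = ∫ d(x, supp q) dp + ∫ d(x, supp p) dq` (valued in `ℝ≥0∞`). -/
def Dtri {X : Type*} [MeasurableSpace X] [PseudoMetricSpace X] (p q : Measure X) : ℝ≥0∞ :=
  (∫⁻ x, ENNReal.ofReal (infDist x (msupport q)) ∂p) +
  (∫⁻ x, ENNReal.ofReal (infDist x (msupport p)) ∂q)

/-- The Wasserstein-1 distance: infimum of `∫ d(x, y) dγ` over couplings of `p` and `q`. -/
def DW {X : Type*} [MeasurableSpace X] [PseudoMetricSpace X] (p q : Measure X) : ℝ≥0∞ :=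
  ⨅ γ ∈ {γ : Measure (X × X) | γ.map Prod.fst = p ∧ γ.map Prod.snd = q},
    ∫⁻ z, ENNReal.ofReal (dist z.1 z.2) ∂γ

/-- The β-admissible Wasserstein distance: infimum of `∫ d(x, y) dγ` over measures `γ`
whose first marginal is `p` and whose second marginal is `≤ (1 + β) • q`. -/
def DWbeta {X : Type*} [MeasurableSpace X] [PseudoMetricSpace X]
    (β : ℝ) (p q : Measure X) : ℝ≥0∞ :=
  ⨅ γ ∈ {γ : Measure (X × X) |
      γ.map Prod.fst = p ∧ γ.map Prod.snd ≤ (ENNReal.ofReal (1 + β)) • q},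
    ∫⁻ z, ENNReal.ofReal (dist z.1 z.2) ∂γ

/-- The symmetrized (β₁, β₂)-admissible Wasserstein distance. -/
def DWsym {X : Type*} [MeasurableSpace X] [PseudoMetricSpace X]
    (β₁ β₂ : ℝ) (p q : Measure X) : ℝ≥0∞ :=
  DWbeta β₁ p q + DWbeta β₂ q p

/-- The β-admissible Wasserstein distance vanishes iff
`p(A) ≤ (1 + β) q(A)` for every Borel set `A`. -/
theorem beta_admissible_zero_iff (n : ℕ) (β : ℝ) (hβ : 0 < β)
    (p q : Measure (EuclideanSpace ℝ (Fin n)))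
    [IsProbabilityMeasure p] [IsProbabilityMeasure q] :
    DWbeta β p q = 0 ↔
      ∀ A : Set (EuclideanSpace ℝ (Fin n)), MeasurableSet A →
        p A ≤ ENNReal.ofReal (1 + β) * q A := by
  set c : ℝ≥0∞ := ENNReal.ofReal (1 + β) with hc
  constructor
  · intro h0 A hA
    by_contra hlt
    push_neg at hlt
    -- inner regularity: compact K ⊆ A with c * q A < p K
    obtain ⟨K, hKA, hKc, hKm⟩ := hA.exists_lt_isCompact_of_ne_top (measure_ne_top p A) hlt
    -- outer regularity of c • q at K
    have hout : (c • q).OuterRegular := Measure.OuterRegular.smul q ENNReal.ofReal_ne_top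
    have hqK : (c • q) K < p K := by
      refine lt_of_le_of_lt ?_ hKm
      simpa using mul_le_mul_right (measure_mono hKA) c
    obtain ⟨U, hKU, hUo, hUm⟩ := Set.exists_isOpen_lt_of_lt (μ := c • q) K (p K) hqK
    -- separation
    obtain ⟨δ, hδ, hthick⟩ := hKc.exists_thickening_subset_open hUo hKU
    -- every admissible γ has lintegral ≥ ofReal δ * (p K - (c•q) U)
    have key : ∀ γ ∈ {γ : Measure (EuclideanSpace ℝ (Fin n) × EuclideanSpace ℝ (Fin n)) |
        γ.map Prod.fst = p ∧ γ.map Prod.snd ≤ c • q},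
        ENNReal.ofReal δ * (p K - (c • q) U) ≤ ∫⁻ z, ENNReal.ofReal (dist z.1 z.2) ∂γ := by
      rintro γ ⟨h1, h2⟩
      have hS : MeasurableSet (K ×ˢ Uᶜ) := (hKc.measurableSet).prod hUo.isClosed_compl.measurableSet
      have hγ1 : γ (Prod.fst ⁻¹' K) = p K := by
        rw [← h1, Measure.map_apply measurable_fst hKc.measurableSet]
      have hγ2 : γ (Prod.snd ⁻¹' U) ≤ (c • q) U := by
        rw [← Measure.map_apply measurable_snd hUo.measurableSet]
        exact h2 U
      have hsub : Prod.fst ⁻¹' K ⊆ (Prod.snd ⁻¹' U) ∪ (K ×ˢ Uᶜ) := by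
        rintro ⟨x, y⟩ hx
        by_cases hy : y ∈ U
        · exact Or.inl hy
        · exact Or.inr ⟨hx, hy⟩
      have hmass : p K - (c • q) U ≤ γ (K ×ˢ Uᶜ) := by
        have := (measure_mono hsub).trans (measure_union_le (μ := γ) _ _)
        rw [hγ1] at this
        exact tsub_le_iff_left.2 (this.trans (add_le_add_left hγ2 _))
      calc ENNReal.ofReal δ * (p K - (c • q) U)
          ≤ ENNReal.ofReal δ * γ (K ×ˢ Uᶜ) := mul_le_mul_right hmass _
        _ = ∫⁻ _ in K ×ˢ Uᶜ, ENNReal.ofReal δ ∂γ := (setLIntegral_const _ _).symm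
        _ ≤ ∫⁻ z in K ×ˢ Uᶜ, ENNReal.ofReal (dist z.1 z.2) ∂γ := by
            refine setLIntegral_mono' hS fun z hz => ?_
            refine ENNReal.ofReal_le_ofReal ?_
            by_contra hd
            push_neg at hd
            exact hz.2 (hthick (mem_thickening_iff.2 ⟨z.1, hz.1, by
              rw [dist_comm]; exact hd⟩))
        _ ≤ ∫⁻ z, ENNReal.ofReal (dist z.1 z.2) ∂γ := setLIntegral_le_lintegral _ _
    have hpos : 0 < ENNReal.ofReal δ * (p K - (c • q) U) := by
      refine ENNReal.mul_pos ?_ ?_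
      · simpa using (ENNReal.ofReal_pos.2 hδ).ne'
      · exact (tsub_pos_of_lt hUm).ne'
    have : ENNReal.ofReal δ * (p K - (c • q) U) ≤ DWbeta β p q := le_iInf₂ key
    rw [h0] at this
    exact hpos.ne' (le_antisymm this zero_le)
  · intro h
    have hle : p ≤ c • q := by
      refine Measure.le_iff.2 fun s hs => ?_
      simpa [hc, smul_eq_mul] using h s hs
    set γ : Measure (EuclideanSpace ℝ (Fin n) × EuclideanSpace ℝ (Fin n)) :=
      p.map (fun x => (x, x)) with hγ
    have hdiag : Measurable fun x : EuclideanSpace ℝ (Fin n) => (x, x) :=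
      measurable_id.prodMk measurable_id
    have h1 : γ.map Prod.fst = p := by
      rw [hγ, Measure.map_map measurable_fst hdiag]
      have : (Prod.fst ∘ fun x : EuclideanSpace ℝ (Fin n) => (x, x)) = id := rfl
      rw [this, Measure.map_id]
    have h2 : γ.map Prod.snd ≤ c • q := by
      rw [hγ, Measure.map_map measurable_snd hdiag]
      have : (Prod.snd ∘ fun x : EuclideanSpace ℝ (Fin n) => (x, x)) = id := rfl
      rw [this, Measure.map_id]
      exact hle
    have hint : ∫⁻ z, ENNReal.ofReal (dist z.1 z.2) ∂γ = 0 := by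
      rw [hγ, lintegral_map ?_ hdiag]
      · simp
      · exact (measurable_fst.dist measurable_snd).ennreal_ofReal
    refine le_antisymm ?_ zero_le
    rw [← hint]
    exact iInf₂_le γ ⟨h1, h2⟩
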